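/- The polynomial α_5(s) = (315/128)s⁵ − (735/128)s⁴ + (399/64)s³ − (279/64)s² + (215/128)s − 35/128 factors as α_5(s) = (1/128)(s − 1)(315s⁴ − 420s³ + 378s² − 180s + 35), and every complex root z of 315s⁴ − 420s³ + 378s² − 180s + 35 satisfies |z| < 1. Consequently, 1 is a simple root of α_5 and all other roots lie strictly inside the unit circle, so the 5-step LIL method satisfies the Dahlquist root condition (zero-stability). -/

import Mathlib

open Polynomial

private lemma lil_tri (a b c d : ℂ) :
    ‖a - b + c - d‖
      ≤ ‖a‖ + ‖b‖ + ‖c‖ + ‖d‖ := by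
  have h1 := norm_sub_le (a - b + c) d
  have h2 := norm_add_le (a - b) c
  have h3 := norm_sub_le a b
  have h4 := @norm_add_le ℂ _
  linarith [norm_nonneg c]

private lemma lil_quartic_root_bound (z : ℂ)
    (h : 315 * z ^ 4 - 420 * z ^ 3 + 378 * z ^ 2 - 180 * z + 35 = 0) :
    ‖z‖ < 1 := by
  by_contra hc
  push_neg at hc
  -- first Graeffe step: q1(z^2) = p(z) * p(-z)
  have hq1 : 99225 * (z ^ 2) ^ 4 + 61740 * (z ^ 2) ^ 3 + 13734 * (z ^ 2) ^ 2
      - 5940 * z ^ 2 + 1225 = 0 := by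
    have hid : (315 * z ^ 4 - 420 * z ^ 3 + 378 * z ^ 2 - 180 * z + 35) *
        (315 * z ^ 4 + 420 * z ^ 3 + 378 * z ^ 2 + 180 * z + 35)
        = 99225 * (z ^ 2) ^ 4 + 61740 * (z ^ 2) ^ 3 + 13734 * (z ^ 2) ^ 2
          - 5940 * z ^ 2 + 1225 := by ring
    rw [h, zero_mul] at hid
    exact hid.symm
  -- second Graeffe step: q2(z^4) = q1(z^2) * q1(-z^2)
  have hq2 : (9845600625 : ℂ) * (z ^ 4) ^ 4
      = 1086315300 * (z ^ 4) ^ 3 - 1165195206 * (z ^ 4) ^ 2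
        + 1635300 * z ^ 4 - 1500625 := by
    have hid : (99225 * (z ^ 2) ^ 4 + 61740 * (z ^ 2) ^ 3 + 13734 * (z ^ 2) ^ 2
          - 5940 * z ^ 2 + 1225) *
        (99225 * (z ^ 2) ^ 4 - 61740 * (z ^ 2) ^ 3 + 13734 * (z ^ 2) ^ 2
          + 5940 * z ^ 2 + 1225)
        = 9845600625 * (z ^ 4) ^ 4 - 1086315300 * (z ^ 4) ^ 3
          + 1165195206 * (z ^ 4) ^ 2 - 1635300 * z ^ 4 + 1500625 := by ring
    rw [hq1, zero_mul] at hid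
    linear_combination -hid
  set r : ℝ := ‖z ^ 4‖ with hr
  have hr1 : (1 : ℝ) ≤ r := by
    rw [hr, norm_pow]
    exact one_le_pow₀ hc
  have habs : (9845600625 : ℝ) * r ^ 4
      ≤ 1086315300 * r ^ 3 + 1165195206 * r ^ 2 + 1635300 * r + 1500625 := by
    have h1 : ‖(9845600625 : ℂ) * (z ^ 4) ^ 4‖ = 9845600625 * r ^ 4 := by
      rw [norm_mul, norm_pow, ← hr]
      norm_num
    have h2 := lil_tri (1086315300 * (z ^ 4) ^ 3) (1165195206 * (z ^ 4) ^ 2)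
      (1635300 * z ^ 4) (1500625 : ℂ)
    rw [hq2] at h1
    have e2 : ‖(1086315300 : ℂ) * (z ^ 4) ^ 3‖ = 1086315300 * r ^ 3 := by
      rw [norm_mul, norm_pow, ← hr]; norm_num
    have e3 : ‖(1165195206 : ℂ) * (z ^ 4) ^ 2‖ = 1165195206 * r ^ 2 := by
      rw [norm_mul, norm_pow, ← hr]; norm_num
    have e4 : ‖(1635300 : ℂ) * z ^ 4‖ = 1635300 * r := by
      rw [norm_mul, ← hr]; norm_num
    have e5 : ‖(1500625 : ℂ)‖ = 1500625 := by norm_num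
    rw [e2, e3, e4, e5] at h2
    linarith [h1 ▸ h2]
  have p1 : r ≤ r ^ 3 := by
    calc r = r ^ 1 := (pow_one r).symm
    _ ≤ r ^ 3 := pow_le_pow_right₀ hr1 (by norm_num)
  have p2 : r ^ 2 ≤ r ^ 3 := pow_le_pow_right₀ hr1 (by norm_num)
  have p0 : (1 : ℝ) ≤ r ^ 3 := one_le_pow₀ hr1
  have p3 : r ^ 3 ≤ r ^ 4 := pow_le_pow_right₀ hr1 (by norm_num)
  nlinarith

/-- First characteristic polynomial of the 5-step LIL method, over `ℂ`. -/
noncomputable def lilAlpha5 : Polynomial ℂ :=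
  C (315 / 128) * X ^ 5 - C (735 / 128) * X ^ 4 + C (399 / 64) * X ^ 3
    - C (279 / 64) * X ^ 2 + C (215 / 128) * X - C (35 / 128)

/-- `α₅(s)` factors as `(1/128)(s − 1)(315s⁴ − 420s³ + 378s² − 180s + 35)`, every
complex root `z` of `315s⁴ − 420s³ + 378s² − 180s + 35` satisfies `|z| < 1`, `1`
is a simple root of `α₅`, and all other roots lie strictly inside the unit
circle: the 5-step LIL method satisfies the Dahlquist root condition
(zero-stability). -/
theorem lil_root_condition_m5 :
    lilAlpha5 = C (1 / 128) * (X - C 1)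
        * (C 315 * X ^ 4 - C 420 * X ^ 3 + C 378 * X ^ 2 - C 180 * X + C 35) ∧
    (∀ z : ℂ, 315 * z ^ 4 - 420 * z ^ 3 + 378 * z ^ 2 - 180 * z + 35 = 0 →
      ‖z‖ < 1) ∧
    lilAlpha5.rootMultiplicity 1 = 1 ∧
    (∀ z : ℂ, lilAlpha5.eval z = 0 → z ≠ 1 → ‖z‖ < 1) := by
  have hfac : lilAlpha5 = C (1 / 128) * (X - C 1)
      * (C 315 * X ^ 4 - C 420 * X ^ 3 + C 378 * X ^ 2 - C 180 * X + C 35) := by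
    unfold lilAlpha5
    rw [show (315 / 128 : ℂ) = (1 / 128) * 315 by norm_num,
        show (735 / 128 : ℂ) = (1 / 128) * (420 + 315) by norm_num,
        show (399 / 64 : ℂ) = (1 / 128) * (378 + 420) by norm_num,
        show (279 / 64 : ℂ) = (1 / 128) * (180 + 378) by norm_num,
        show (215 / 128 : ℂ) = (1 / 128) * (35 + 180) by norm_num,
        show (35 / 128 : ℂ) = (1 / 128) * 35 by norm_num]
    simp only [C_mul, C_add, C_1]
    ring
  refine ⟨hfac, lil_quartic_root_bound, ?_, ?_⟩
  · -- root multiplicity at 1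
    set q : Polynomial ℂ :=
      C 315 * X ^ 4 - C 420 * X ^ 3 + C 378 * X ^ 2 - C 180 * X + C 35 with hq
    have hqroot : ¬ q.IsRoot 1 := by
      simp [hq, IsRoot]
      norm_num
    have hq0 : q ≠ 0 := fun h0 => hqroot (by simp [h0, IsRoot])
    have hC0 : (C (1 / 128 : ℂ)) ≠ 0 := by
      simpa using (C_ne_zero.mpr (by norm_num : (1 / 128 : ℂ) ≠ 0))
    have hX0 : (X - C (1 : ℂ)) ≠ 0 := X_sub_C_ne_zero 1
    rw [hfac, rootMultiplicity_mul (mul_ne_zero (mul_ne_zero hC0 hX0) hq0),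
        rootMultiplicity_mul (mul_ne_zero hC0 hX0),
        rootMultiplicity_eq_zero hqroot,
        rootMultiplicity_eq_zero (by simp [IsRoot] : ¬ (C (1 / 128 : ℂ)).IsRoot 1),
        rootMultiplicity_X_sub_C_self]
  · intro z hz hz1
    rw [hfac] at hz
    simp only [eval_mul, eval_sub, eval_add, eval_pow, eval_C, eval_X] at hz
    rcases mul_eq_zero.mp hz with h | h
    · rcases mul_eq_zero.mp h with h' | h'
      · norm_num at h'
      · exact absurd (by linear_combination h') hz1
    · exact lil_quartic_root_bound z (by linear_combination h)
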